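/- Let q be an even integer with 2 ≤ q < n, and let H be the SYK Hamiltonian. For every integer k ≥ 1 there is a constant c_k, depending only on k and on the common distribution of the J_R (not on n or q), such that Var[L_n^{−1} Tr(H^k)] ≤ c_k · C(n,q)^{−1}. -/

import Mathlib

open Matrix MeasureTheory ProbabilityTheory BigOperators
open scoped Classical

/-- Ordered product `Ψ_A = ψ_{i_1} ⋯ ψ_{i_m}` over a subset `A = {i_1 < ⋯ < i_m}`. -/
noncomputable def PsiProd {n : ℕ} {L : Type*} [Fintype L] [DecidableEq L]
    (ψ : Fin n → Matrix L L ℂ) (A : Finset (Fin n)) : Matrix L L ℂ :=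
  ((A.sort (· ≤ ·)).map ψ).prod

/-- The SYK Hamiltonian `H = i^{q/2} C(n,q)^{-1/2} Σ_R J_R Ψ_R`. -/
noncomputable def sykH (n q : ℕ) {Ω : Type}
    (ψ : Fin n → Matrix (Fin (2 ^ (n / 2))) (Fin (2 ^ (n / 2))) ℂ)
    (J : {A : Finset (Fin n) // A.card = q} → Ω → ℝ) (ω : Ω) :
    Matrix (Fin (2 ^ (n / 2))) (Fin (2 ^ (n / 2))) ℂ :=
  (Complex.I ^ (q / 2) * ((Real.sqrt (n.choose q) : ℂ))⁻¹) •
    ∑ R : {A : Finset (Fin n) // A.card = q},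
      (J R ω : ℂ) • PsiProd ψ (R : Finset (Fin n))


lemma sum_pow_eq {ι R : Type*} [Fintype ι] [Semiring R] (f : ι → R) (k : ℕ) :
    (∑ r, f r) ^ k = ∑ t : Fin k → ι, (List.ofFn (fun i => f (t i))).prod := by
  induction k with
  | zero => simp
  | succ k ih =>
    have he := Equiv.sum_comp (Fin.consEquiv (fun _ : Fin (k+1) => ι))
      (fun t : Fin (k+1) → ι => (List.ofFn (fun i => f (t i))).prod)
    rw [← he, Fintype.sum_prod_type]
    have : ∀ (r : ι) (t : Fin k → ι),
        (List.ofFn (fun i => f ((Fin.consEquiv (fun _ : Fin (k+1) => ι)) (r, t) i))).prod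
          = f r * (List.ofFn (fun i => f (t i))).prod := by
      intro r t
      rw [List.ofFn_succ, List.prod_cons]
      simp [Fin.consEquiv]
    simp only [this]
    rw [pow_succ', ih, Finset.sum_mul_sum]

lemma ofFn_smul_prod {L : Type*} [Fintype L] [DecidableEq L] {k : ℕ}
    (c : Fin k → ℂ) (M : Fin k → Matrix L L ℂ) :
    (List.ofFn (fun i => c i • M i)).prod = (∏ i, c i) • (List.ofFn M).prod := by
  induction k with
  | zero => simp
  | succ k ih =>
    rw [List.ofFn_succ, List.prod_cons, ih (fun i => c i.succ) (fun i => M i.succ),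
      List.ofFn_succ (f := M), List.prod_cons, smul_mul_smul_comm, Fin.prod_univ_succ]

section Cliff
variable {n : ℕ} {L : Type*} [Fintype L] [DecidableEq L] (ψ : Fin n → Matrix L L ℂ)
variable (hψ2 : ∀ i, ψ i * ψ i = 1)
variable (hanti : ∀ i j, i ≠ j → ψ i * ψ j = -(ψ j * ψ i))

include hψ2 hanti in
lemma psi_move (i : Fin n) : ∀ (l : List (Fin n)),
    ψ i * (l.map ψ).prod =
      ((-1 : ℂ) ^ (l.countP (fun j => decide (j ≠ i)))) • ((l.map ψ).prod * ψ i)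
  | [] => by simp
  | a :: l => by
    by_cases hai : a = i
    · subst hai
      have ih := psi_move a l
      have hinv : ((-1:ℂ)^(l.countP (fun j => decide (j ≠ a))))
          * ((-1)^(l.countP (fun j => decide (j ≠ a)))) = 1 := by
        rw [← mul_pow]; norm_num
      have ih' : (l.map ψ).prod * ψ a
          = ((-1:ℂ)^(l.countP (fun j => decide (j ≠ a)))) • (ψ a * (l.map ψ).prod) := by
        rw [ih, smul_smul, hinv, one_smul]
      have hc : (a :: l).countP (fun j => decide (j ≠ a))
          = l.countP (fun j => decide (j ≠ a)) := by
        rw [List.countP_cons]; simp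
      rw [hc, List.map_cons, List.prod_cons, ← mul_assoc, hψ2, one_mul, mul_assoc, ih',
        mul_smul_comm, smul_smul, hinv, one_smul, ← mul_assoc, hψ2, one_mul]
    · have ih := psi_move i l
      have h1 : ψ i * ψ a = -(ψ a * ψ i) := hanti i a (fun h => hai h.symm)
      have hc : (a :: l).countP (fun j => decide (j ≠ i))
          = l.countP (fun j => decide (j ≠ i)) + 1 := by
        rw [List.countP_cons]; simp [hai]
      rw [hc, List.map_cons, List.prod_cons, pow_succ, ← mul_assoc, h1, neg_mul, mul_assoc,
        ih, mul_smul_comm, ← neg_smul, ← mul_assoc, mul_neg_one]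

include hψ2 hanti in
lemma trace_map_prod_eq_zero (l : List (Fin n)) (hlen : Even l.length)
    (i : Fin n) (hodd : Odd (l.count i)) : ((l.map ψ).prod).trace = 0 := by
  have hmove := psi_move ψ hψ2 hanti i l
  have hsplit : l.countP (fun j => decide (j ≠ i)) + l.count i = l.length := by
    have h := List.length_eq_countP_add_countP (l := l) (fun j => decide (j ≠ i))
    rw [h, List.count]
    congr 1
    apply List.countP_congr
    intro x _
    simp
  have hcodd : Odd (l.countP (fun j => decide (j ≠ i))) := by
    obtain ⟨m, hm⟩ := hlen
    obtain ⟨r, hr⟩ := hodd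
    exact ⟨m - r - 1, by omega⟩
  have h1 : ((l.map ψ).prod).trace = ((ψ i * (l.map ψ).prod) * ψ i).trace := by
    rw [trace_mul_comm, ← mul_assoc, hψ2, one_mul]
  have h2 : ((ψ i * (l.map ψ).prod) * ψ i).trace = -((l.map ψ).prod).trace := by
    rw [hmove, smul_mul_assoc, trace_smul, mul_assoc, hψ2, mul_one, hcodd.neg_one_pow]
    simp
  have h3 := h1.trans h2
  linear_combination h3 / 2





include hψ2 hanti in
lemma trace_psiProd_prod_eq_zero {k q : ℕ} (hq : Even q)
    (t : Fin k → {A : Finset (Fin n) // A.card = q})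
    (i : Fin n)
    (hodd : Odd ((Finset.univ.filter (fun j => i ∈ (t j : Finset (Fin n)))).card)) :
    ((List.ofFn (fun j => PsiProd ψ (t j : Finset (Fin n)))).prod).trace = 0 := by
  set Ls : List (List (Fin n)) := List.ofFn (fun j => ((t j : Finset (Fin n)).sort (· ≤ ·)))
    with hLs
  have hprod : (List.ofFn (fun j => PsiProd ψ (t j : Finset (Fin n)))).prod
      = ((Ls.flatten).map ψ).prod := by
    rw [List.map_flatten, List.prod_flatten, hLs, List.map_ofFn, List.map_ofFn]
    rfl
  have hlen : Even Ls.flatten.length := by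
    rw [List.length_flatten, hLs, List.map_ofFn]
    have : (List.ofFn ((fun l : List (Fin n) => l.length) ∘
        fun j => ((t j : Finset (Fin n)).sort (· ≤ ·)))) = List.ofFn (fun _ : Fin k => q) := by
      congr 1
      funext j
      simp [Finset.length_sort, (t j).2]
    rw [this, List.sum_ofFn]
    simp only [Finset.sum_const, Finset.card_univ, Fintype.card_fin, smul_eq_mul]
    exact hq.mul_left k
  have hcount : Ls.flatten.count i
      = (Finset.univ.filter (fun j => i ∈ (t j : Finset (Fin n)))).card := by
    rw [List.count_flatten, hLs, List.map_ofFn, List.sum_ofFn, Finset.card_filter]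
    apply Finset.sum_congr rfl
    intro j _
    by_cases hmem : i ∈ (t j : Finset (Fin n))
    · rw [if_pos hmem]
      exact List.count_eq_one_of_mem (Finset.sort_nodup _ _)
        ((Finset.mem_sort _).mpr hmem)
    · rw [if_neg hmem]
      exact List.count_eq_zero_of_not_mem (fun h => hmem ((Finset.mem_sort _).mp h))
  rw [hprod]
  exact trace_map_prod_eq_zero ψ hψ2 hanti Ls.flatten hlen i (hcount ▸ hodd)

end Cliff


section Unitary
variable {L : Type*} [Fintype L] [DecidableEq L]

lemma trace_norm_le_of_unitary (U : Matrix L L ℂ) (hU : U ∈ unitary (Matrix L L ℂ)) :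
    ‖U.trace‖ ≤ (Fintype.card L : ℝ) := by
  have h2 : U * star U = 1 := (Unitary.mem_iff.mp hU).2
  have hdiag : ∀ i : L, ‖U i i‖ ≤ 1 := by
    intro i
    have h3 : (U * star U) i i = (1 : Matrix L L ℂ) i i := by rw [h2]
    rw [Matrix.mul_apply, Matrix.one_apply_eq] at h3
    have h4 : ∀ j : L, U i j * (star U) j i = (Complex.normSq (U i j) : ℂ) := by
      intro j
      rw [Matrix.star_apply, Complex.star_def, ← Complex.mul_conj]
    rw [Fintype.sum_congr _ _ h4] at h3
    have h5 : ∑ j : L, Complex.normSq (U i j) = 1 := by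
      have := congrArg Complex.re h3
      simpa using this
    have h6 : Complex.normSq (U i i) ≤ 1 := by
      rw [← h5]
      exact Finset.single_le_sum (f := fun j => Complex.normSq (U i j))
        (fun j _ => Complex.normSq_nonneg _) (Finset.mem_univ i)
    have h7 : ‖U i i‖ ^ 2 ≤ 1 := by rwa [← Complex.sq_norm] at h6
    nlinarith [norm_nonneg (U i i)]
  calc ‖U.trace‖ ≤ ∑ i : L, ‖U i i‖ := norm_sum_le _ _
    _ ≤ ∑ _i : L, (1 : ℝ) := Finset.sum_le_sum (fun i _ => hdiag i)
    _ = (Fintype.card L : ℝ) := by simp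

variable {n : ℕ} (ψ : Fin n → Matrix L L ℂ)

lemma psi_unitary (hherm : ∀ i, (ψ i).IsHermitian) (hψ2 : ∀ i, ψ i * ψ i = 1) (i : Fin n) :
    ψ i ∈ unitary (Matrix L L ℂ) := by
  rw [Unitary.mem_iff]
  have hs : star (ψ i) = ψ i := hherm i
  rw [hs]
  exact ⟨hψ2 i, hψ2 i⟩

lemma psiProd_unitary (hherm : ∀ i, (ψ i).IsHermitian) (hψ2 : ∀ i, ψ i * ψ i = 1)
    (A : Finset (Fin n)) : PsiProd ψ A ∈ unitary (Matrix L L ℂ) := by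
  apply list_prod_mem
  intro x hx
  obtain ⟨i, _, rfl⟩ := List.mem_map.mp hx
  exact psi_unitary ψ hherm hψ2 i

lemma ofFn_psiProd_unitary (hherm : ∀ i, (ψ i).IsHermitian) (hψ2 : ∀ i, ψ i * ψ i = 1)
    {k : ℕ} (t : Fin k → Finset (Fin n)) :
    (List.ofFn (fun j => PsiProd ψ (t j))).prod ∈ unitary (Matrix L L ℂ) := by
  apply list_prod_mem
  intro x hx
  obtain ⟨j, rfl⟩ := List.mem_ofFn.mp hx
  exact psiProd_unitary ψ hherm hψ2 _
end Unitary

section Counting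
variable {ι : Type*} [Fintype ι] [DecidableEq ι]

lemma count_bad (k : ℕ) (hk : 1 ≤ k) (good : (Fin k → ι) → Prop)
    (hdet : ∀ (j₀ : Fin k) (t t' : Fin k → ι), good t → good t' →
      (∀ j, j ≠ j₀ → t j = t' j) → t = t') :
    (Finset.univ.filter (fun ts : (Fin k → ι) × (Fin k → ι) =>
        good ts.1 ∧ good ts.2 ∧ (∃ i j, ts.1 i = ts.2 j) ∧
        ∀ R : ι, (Finset.univ.filter
            (fun p : Fin k ⊕ Fin k => Sum.elim ts.1 ts.2 p = R)).card ≠ 1)).card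
      ≤ (k + k) ^ (k + k) * Fintype.card ι ^ (k - 1) := by
  classical
  have i0 : Fin k := ⟨0, hk⟩
  -- canonical representative of the fiber of value v under u
  set pat : ((Fin k ⊕ Fin k) → ι) → ι → (Fin k ⊕ Fin k) := fun u v =>
    if h : (Finset.univ.filter (fun j : Fin k => u (Sum.inl j) = v)).Nonempty
    then Sum.inl ((Finset.univ.filter (fun j : Fin k => u (Sum.inl j) = v)).min' h)
    else Sum.inr (if h2 : (Finset.univ.filter (fun j : Fin k => u (Sum.inr j) = v)).Nonempty
      then (Finset.univ.filter (fun j : Fin k => u (Sum.inr j) = v)).min' h2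
      else i0) with hpat
  have prop1 : ∀ (u : (Fin k ⊕ Fin k) → ι) (p : Fin k ⊕ Fin k), u (pat u (u p)) = u p := by
    intro u p
    by_cases h : (Finset.univ.filter (fun j : Fin k => u (Sum.inl j) = u p)).Nonempty
    · have hm := (Finset.univ.filter (fun j : Fin k => u (Sum.inl j) = u p)).min'_mem h
      rw [Finset.mem_filter] at hm
      simp only [hpat, dif_pos h]
      exact hm.2
    · have hp : (Finset.univ.filter (fun j : Fin k => u (Sum.inr j) = u p)).Nonempty := by
        rcases p with j | j
        · exact absurd ⟨j, Finset.mem_filter.mpr ⟨Finset.mem_univ j, rfl⟩⟩ h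
        · exact ⟨j, Finset.mem_filter.mpr ⟨Finset.mem_univ j, rfl⟩⟩
      have hm := (Finset.univ.filter (fun j : Fin k => u (Sum.inr j) = u p)).min'_mem hp
      rw [Finset.mem_filter] at hm
      simp only [hpat, dif_neg h, dif_pos hp]
      exact hm.2
  set Bad : Finset ((Fin k → ι) × (Fin k → ι)) :=
    Finset.univ.filter (fun ts : (Fin k → ι) × (Fin k → ι) =>
        good ts.1 ∧ good ts.2 ∧ (∃ i j, ts.1 i = ts.2 j) ∧
        ∀ R : ι, (Finset.univ.filter
            (fun p : Fin k ⊕ Fin k => Sum.elim ts.1 ts.2 p = R)).card ≠ 1) with hBad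
  set patF : ((Fin k → ι) × (Fin k → ι)) → ((Fin k ⊕ Fin k) → (Fin k ⊕ Fin k)) :=
    fun ts p => pat (Sum.elim ts.1 ts.2) (Sum.elim ts.1 ts.2 p) with hpatF
  rw [Finset.card_eq_sum_card_fiberwise (f := patF)
    (t := (Finset.univ : Finset ((Fin k ⊕ Fin k) → (Fin k ⊕ Fin k))))
    (fun ts _ => Finset.mem_univ _)]
  have main : ∀ π : (Fin k ⊕ Fin k) → (Fin k ⊕ Fin k),
      (Bad.filter (fun ts => patF ts = π)).card ≤ Fintype.card ι ^ (k - 1) := by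
    intro π
    by_cases hne : (Bad.filter (fun ts => patF ts = π)).Nonempty
    swap
    · rw [Finset.not_nonempty_iff_eq_empty] at hne
      rw [hne]
      simp
    -- facts holding for every member of the fiber
    have F1 : ∀ ts ∈ Bad.filter (fun ts => patF ts = π),
        ∀ p, Sum.elim ts.1 ts.2 (π p) = Sum.elim ts.1 ts.2 p := by
      intro ts hts p
      have hπ : patF ts = π := (Finset.mem_filter.mp hts).2
      rw [← hπ]
      exact prop1 _ p
    have F2 : ∀ ts ∈ Bad.filter (fun ts => patF ts = π), ∀ p p',
        Sum.elim ts.1 ts.2 p = Sum.elim ts.1 ts.2 p' → π p = π p' := by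
      intro ts hts p p' h
      have hπ : patF ts = π := (Finset.mem_filter.mp hts).2
      rw [← hπ]
      simp only [hpatF]
      rw [h]
    have F2' : ∀ ts ∈ Bad.filter (fun ts => patF ts = π), ∀ p p',
        π p = π p' → Sum.elim ts.1 ts.2 p = Sum.elim ts.1 ts.2 p' := by
      intro ts hts p p' h
      rw [← F1 ts hts p, ← F1 ts hts p', h]
    obtain ⟨ts₀, hts₀⟩ := hne
    have hts₀Bad : ts₀ ∈ Bad := (Finset.mem_filter.mp hts₀).1
    have hcond := (Finset.mem_filter.mp hts₀Bad).2
    obtain ⟨hgood1₀, hgood2₀, ⟨iw, jw, hcross⟩, hmult₀⟩ := hcond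
    have hι : Nonempty ι := ⟨ts₀.1 i0⟩
    have hcard1 : 1 ≤ Fintype.card ι := Fintype.card_pos_iff.mpr hι
    have hidem : π ∘ π = π := by
      funext p
      exact F2 ts₀ hts₀ (π p) p (F1 ts₀ hts₀ p)
    by_cases hd : (Finset.univ.image π).card ≤ k - 1
    -- CASE A: few classes
    · apply le_trans (Finset.card_le_card_of_injOn
        (f := fun ts (r : ↥(Finset.univ.image π)) => Sum.elim ts.1 ts.2 (r : Fin k ⊕ Fin k))
        (fun ts _ => Finset.mem_univ _) ?_)
      · rw [Finset.card_univ, Fintype.card_fun, Fintype.card_coe]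
        exact Nat.pow_le_pow_right hcard1 hd
      · intro ts hts ts' hts' heq
        have hall : ∀ p, Sum.elim ts.1 ts.2 p = Sum.elim ts'.1 ts'.2 p := by
          intro p
          have hmem : π p ∈ Finset.univ.image π := Finset.mem_image_of_mem π (Finset.mem_univ p)
          have := congrFun heq ⟨π p, hmem⟩
          rw [← F1 ts hts p, ← F1 ts' hts' p]
          exact this
        exact Prod.ext (funext fun j => hall (Sum.inl j)) (funext fun j => hall (Sum.inr j))
    -- CASE B: k classes, all of size 2
    · -- the image of u₀ has the same cardinality as the image of π
      have hidemp : ∀ p, π (π p) = π p := fun p => congrFun hidem p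
      have hinj : Set.InjOn (Sum.elim ts₀.1 ts₀.2) ↑(Finset.univ.image π) := by
        intro r hr r' hr' h
        obtain ⟨p, _, rfl⟩ := Finset.mem_image.mp hr
        obtain ⟨p', _, rfl⟩ := Finset.mem_image.mp hr'
        have := F2 ts₀ hts₀ (π p) (π p') h
        rwa [hidemp, hidemp] at this
      have himg : (Finset.univ.image π).image (Sum.elim ts₀.1 ts₀.2)
          = Finset.univ.image (Sum.elim ts₀.1 ts₀.2) := by
        apply Finset.Subset.antisymm
        · intro x hx
          obtain ⟨r, _, rfl⟩ := Finset.mem_image.mp hx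
          exact Finset.mem_image_of_mem _ (Finset.mem_univ r)
        · intro x hx
          obtain ⟨p, _, rfl⟩ := Finset.mem_image.mp hx
          rw [← F1 ts₀ hts₀ p]
          exact Finset.mem_image_of_mem _
            (Finset.mem_image_of_mem π (Finset.mem_univ p))
      have hdcard : (Finset.univ.image (Sum.elim ts₀.1 ts₀.2)).card
          = (Finset.univ.image π).card := by
        rw [← himg, Finset.card_image_of_injOn hinj]
      -- multiplicities
      have hsum : ∑ R ∈ Finset.univ.image (Sum.elim ts₀.1 ts₀.2),
          (Finset.univ.filter (fun p : Fin k ⊕ Fin k => Sum.elim ts₀.1 ts₀.2 p = R)).card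
          = k + k := by
        rw [← Finset.card_eq_sum_card_image]
        simp [Finset.card_univ]
      have hge2 : ∀ R ∈ Finset.univ.image (Sum.elim ts₀.1 ts₀.2),
          2 ≤ (Finset.univ.filter
            (fun p : Fin k ⊕ Fin k => Sum.elim ts₀.1 ts₀.2 p = R)).card := by
        intro R hR
        obtain ⟨p, _, rfl⟩ := Finset.mem_image.mp hR
        have h1 : 0 < (Finset.univ.filter (fun p' : Fin k ⊕ Fin k =>
            Sum.elim ts₀.1 ts₀.2 p' = Sum.elim ts₀.1 ts₀.2 p)).card :=
          Finset.card_pos.mpr ⟨p, Finset.mem_filter.mpr ⟨Finset.mem_univ _, rfl⟩⟩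
        have h2 := hmult₀ (Sum.elim ts₀.1 ts₀.2 p)
        omega
    -- from Σ mult = 2k, mult ≥ 2, #classes ≥ k : #classes = k and mult ≡ 2
      have hle : 2 * (Finset.univ.image (Sum.elim ts₀.1 ts₀.2)).card ≤ k + k := by
        rw [← hsum]
        have := Finset.card_nsmul_le_sum
          (Finset.univ.image (Sum.elim ts₀.1 ts₀.2)) _ 2 hge2
        simpa [mul_comm] using this
      have hdk : (Finset.univ.image π).card = k := by omega
      have hall2 : ∀ R ∈ Finset.univ.image (Sum.elim ts₀.1 ts₀.2),
          (Finset.univ.filter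
            (fun p : Fin k ⊕ Fin k => Sum.elim ts₀.1 ts₀.2 p = R)).card = 2 := by
        have hsum2 : ∑ _R ∈ Finset.univ.image (Sum.elim ts₀.1 ts₀.2), 2
            = ∑ R ∈ Finset.univ.image (Sum.elim ts₀.1 ts₀.2),
              (Finset.univ.filter
                (fun p : Fin k ⊕ Fin k => Sum.elim ts₀.1 ts₀.2 p = R)).card := by
          rw [hsum, Finset.sum_const, smul_eq_mul, hdcard, hdk]
          omega
        intro R hR
        exact ((Finset.sum_eq_sum_iff_of_le hge2).mp hsum2 R hR).symm
      have hπcross : π (Sum.inl iw) = π (Sum.inr jw) := by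
        apply F2 ts₀ hts₀
        simpa using hcross
      have hCpair : (Finset.univ.filter (fun p' : Fin k ⊕ Fin k => π p' = π (Sum.inl iw)))
          = {Sum.inl iw, Sum.inr jw} := by
        symm
        apply Finset.eq_of_subset_of_card_le
        · intro x hx
          rcases Finset.mem_insert.mp hx with h | h
          · subst h; exact Finset.mem_filter.mpr ⟨Finset.mem_univ _, rfl⟩
          · rw [Finset.mem_singleton] at h
            subst h
            exact Finset.mem_filter.mpr ⟨Finset.mem_univ _, hπcross.symm⟩
        · have hCu : (Finset.univ.filter
              (fun p' : Fin k ⊕ Fin k => π p' = π (Sum.inl iw)))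
              = Finset.univ.filter (fun p' : Fin k ⊕ Fin k =>
                  Sum.elim ts₀.1 ts₀.2 p' = Sum.elim ts₀.1 ts₀.2 (Sum.inl iw)) := by
            apply Finset.filter_congr
            intro p' _
            constructor
            · exact fun h => F2' ts₀ hts₀ p' (Sum.inl iw) h
            · exact fun h => F2 ts₀ hts₀ p' (Sum.inl iw) h
          rw [hCu, hall2 _ (Finset.mem_image_of_mem _ (Finset.mem_univ (Sum.inl iw)))]
          rw [Finset.card_insert_of_notMem (by simp), Finset.card_singleton]
      have N3a : ∀ j : Fin k, π (Sum.inl j) = π (Sum.inl iw) → j = iw := by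
        intro j hj
        have : Sum.inl j ∈ ({Sum.inl iw, Sum.inr jw} :
            Finset (Fin k ⊕ Fin k)) := by
          rw [← hCpair]; exact Finset.mem_filter.mpr ⟨Finset.mem_univ _, hj⟩
        rcases Finset.mem_insert.mp this with h | h
        · exact Sum.inl_injective h
        · rw [Finset.mem_singleton] at h; exact absurd h (by simp)
      have N3b : ∀ j : Fin k, π (Sum.inr j) = π (Sum.inl iw) → j = jw := by
        intro j hj
        have : Sum.inr j ∈ ({Sum.inl iw, Sum.inr jw} :
            Finset (Fin k ⊕ Fin k)) := by
          rw [← hCpair]; exact Finset.mem_filter.mpr ⟨Finset.mem_univ _, hj⟩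
        rcases Finset.mem_insert.mp this with h | h
        · exact absurd h (by simp)
        · rw [Finset.mem_singleton] at h; exact Sum.inr_injective h
      have hp_mem : π (Sum.inl iw) ∈ Finset.univ.image π :=
        Finset.mem_image_of_mem π (Finset.mem_univ _)
      have hScard : ((Finset.univ.image π).erase (π (Sum.inl iw))).card = k - 1 := by
        rw [Finset.card_erase_of_mem hp_mem, hdk]
      apply le_trans (Finset.card_le_card_of_injOn
        (f := fun ts (r : ↥((Finset.univ.image π).erase (π (Sum.inl iw)))) =>
          Sum.elim ts.1 ts.2 (r : Fin k ⊕ Fin k))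
        (fun ts _ => Finset.mem_univ _) ?_)
      · rw [Finset.card_univ, Fintype.card_fun, Fintype.card_coe, hScard]
      · intro ts hts ts' hts' heq
        have S1 : ∀ p, π p ≠ π (Sum.inl iw) →
            Sum.elim ts.1 ts.2 p = Sum.elim ts'.1 ts'.2 p := by
          intro p hp
          have hmem : π p ∈ (Finset.univ.image π).erase (π (Sum.inl iw)) :=
            Finset.mem_erase.mpr ⟨hp, Finset.mem_image_of_mem π (Finset.mem_univ p)⟩
          have := congrFun heq ⟨π p, hmem⟩
          rw [← F1 ts hts p, ← F1 ts' hts' p]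
          exact this
        have hg1 : good ts.1 := (Finset.mem_filter.mp (Finset.mem_filter.mp hts).1).2.1
        have hg1' : good ts'.1 := (Finset.mem_filter.mp (Finset.mem_filter.mp hts').1).2.1
        have S2 : ∀ j, j ≠ iw → ts.1 j = ts'.1 j := by
          intro j hj
          have := S1 (Sum.inl j) (fun h => hj (N3a j h))
          simpa using this
        have S3 : ts.1 = ts'.1 := hdet iw _ _ hg1 hg1' S2
        have S4 : ∀ j, ts.2 j = ts'.2 j := by
          intro j
          by_cases h : π (Sum.inr j) = π (Sum.inl iw)
          · have hj : j = jw := N3b j h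
            subst hj
            have e1 : Sum.elim ts.1 ts.2 (Sum.inr j) = Sum.elim ts.1 ts.2 (Sum.inl iw) :=
              F2' ts hts _ _ h
            have e2 : Sum.elim ts'.1 ts'.2 (Sum.inr j) = Sum.elim ts'.1 ts'.2 (Sum.inl iw) :=
              F2' ts' hts' _ _ h
            simp only [Sum.elim_inr, Sum.elim_inl] at e1 e2
            rw [e1, e2, S3]
          · have := S1 (Sum.inr j) h
            simpa using this
        exact Prod.ext S3 (funext S4)
  calc ∑ π ∈ (Finset.univ : Finset ((Fin k ⊕ Fin k) → (Fin k ⊕ Fin k))),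
        (Bad.filter (fun ts => patF ts = π)).card
      ≤ ∑ _π ∈ (Finset.univ : Finset ((Fin k ⊕ Fin k) → (Fin k ⊕ Fin k))),
        Fintype.card ι ^ (k - 1) := Finset.sum_le_sum (fun π _ => main π)
    _ = (k + k) ^ (k + k) * Fintype.card ι ^ (k - 1) := by
      rw [Finset.sum_const, Finset.card_univ, Fintype.card_fun, Fintype.card_sum,
        Fintype.card_fin, smul_eq_mul]

end Counting

section Prob
variable {Ω : Type} [mΩ : MeasurableSpace Ω] {P : Measure Ω} [IsProbabilityMeasure P]
variable {ι : Type*} [Fintype ι] {J : ι → Ω → ℝ}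

lemma indep_prod_integral (hJm : ∀ R, Measurable (J R))
    (hind : iIndepFun J P)
    (g : ι → ℝ → ℝ) (hg : ∀ R, Measurable (g R))
    (hgi : ∀ R, Integrable (fun ω => g R (J R ω)) P) (S : Finset ι) :
    Integrable (fun ω => ∏ R ∈ S, g R (J R ω)) P ∧
      ∫ ω, ∏ R ∈ S, g R (J R ω) ∂P = ∏ R ∈ S, ∫ ω, g R (J R ω) ∂P := by
  classical
  have hIndep : iIndepFun (fun R ω => g R (J R ω)) P :=
    hind.comp g hg
  have hmeas : ∀ R, Measurable (fun ω => g R (J R ω)) := fun R => (hg R).comp (hJm R)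
  induction S using Finset.induction with
  | empty => simpa using (integrable_const (1 : ℝ))
  | @insert a s ha ih =>
    have hind2 : IndepFun (∏ R ∈ s, (fun ω => g R (J R ω))) (fun ω => g a (J a ω)) P :=
      hIndep.indepFun_finsetProd_of_notMem hmeas ha
    have hfn : (∏ R ∈ s, (fun ω => g R (J R ω))) = fun ω => ∏ R ∈ s, g R (J R ω) := by
      funext ω
      simp [Finset.prod_apply]
    rw [hfn] at hind2
    have hint : Integrable (fun ω => (∏ R ∈ s, g R (J R ω)) * g a (J a ω)) P := by
      have := hind2.integrable_mul ih.1 (hgi a)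
      simpa [Pi.mul_def] using this
    have hprodins : (fun ω => ∏ R ∈ insert a s, g R (J R ω))
        = fun ω => (∏ R ∈ s, g R (J R ω)) * g a (J a ω) := by
      funext ω
      rw [Finset.prod_insert ha]
      ring
    constructor
    · rw [hprodins]
      exact hint
    · rw [hprodins, Finset.prod_insert ha,
        hind2.integral_fun_mul_eq_mul_integral ih.1.aestronglyMeasurable (hgi a).aestronglyMeasurable, ih.2]
      ring
end Prob

section Prob
variable {Ω : Type} [mΩ : MeasurableSpace Ω] {P : Measure Ω} [IsProbabilityMeasure P]
variable {ι : Type*} {J : ι → Ω → ℝ} {μ : Measure ℝ} [IsProbabilityMeasure μ]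

lemma comp_integrable (hJm : ∀ R, Measurable (J R)) (hmap : ∀ R, Measure.map (J R) P = μ)
    (g : ℝ → ℝ) (hg : Measurable g) (hgi : Integrable g μ) (R : ι) :
    Integrable (fun ω => g (J R ω)) P ∧ ∫ ω, g (J R ω) ∂P = ∫ x, g x ∂μ := by
  have h1 : Integrable g (Measure.map (J R) P) := by rw [hmap R]; exact hgi
  constructor
  · exact (integrable_map_measure h1.aestronglyMeasurable (hJm R).aemeasurable).mp h1
  · rw [← integral_map (hJm R).aemeasurable h1.aestronglyMeasurable, hmap R]

lemma pow_int (hmom : ∀ m : ℕ, Integrable (fun x => |x| ^ m) μ) (e : ℕ) :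
    Integrable (fun x : ℝ => x ^ e) μ := by
  refine (hmom e).mono' ((measurable_id.pow_const e).aestronglyMeasurable) ?_
  filter_upwards with x
  rw [Real.norm_eq_abs, abs_pow]

lemma moment_mono (hmom : ∀ m : ℕ, Integrable (fun x => |x| ^ m) μ) {e m : ℕ} (he : e ≤ m) :
    ∫ x, |x| ^ e ∂μ ≤ 1 + ∫ x, |x| ^ m ∂μ := by
  have hb : ∀ x : ℝ, |x| ^ e ≤ 1 + |x| ^ m := by
    intro x
    rcases le_or_gt |x| 1 with h | h
    · have h1 : |x| ^ e ≤ 1 := pow_le_one₀ (abs_nonneg x) h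
      have h2 : (0:ℝ) ≤ |x| ^ m := pow_nonneg (abs_nonneg x) m
      linarith
    · have h1 : |x| ^ e ≤ |x| ^ m := pow_le_pow_right₀ h.le he
      linarith
  have h2 : ∫ x, |x| ^ e ∂μ ≤ ∫ x, (1 + |x| ^ m) ∂μ :=
    integral_mono (hmom e) ((integrable_const 1).add (hmom m)) hb
  rwa [integral_add (integrable_const 1) (hmom m), integral_const, probReal_univ,
    smul_eq_mul, one_mul] at h2

end Prob

theorem stmt12 (μ : Measure ℝ) [IsProbabilityMeasure μ]
    (hmean : ∫ x, x ∂μ = 0) (hvar : ∫ x, x ^ 2 ∂μ = 1)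
    (hmom : ∀ k : ℕ, Integrable (fun x => |x| ^ k) μ)
    (k : ℕ) (hk : 1 ≤ k) :
    ∃ C : ℝ, ∀ (n q : ℕ), 0 < n → Even n → Even q → 2 ≤ q → q < n →
      ∀ ψ : Fin n → Matrix (Fin (2 ^ (n / 2))) (Fin (2 ^ (n / 2))) ℂ,
        (∀ i, (ψ i).IsHermitian) →
        (∀ i j, ψ i * ψ j + ψ j * ψ i =
          if i = j then (2 : ℂ) • (1 : Matrix (Fin (2 ^ (n / 2))) (Fin (2 ^ (n / 2))) ℂ)
          else 0) →
      ∀ (Ω : Type) (mΩ : MeasurableSpace Ω) (P : Measure Ω), IsProbabilityMeasure P →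
      ∀ J : {A : Finset (Fin n) // A.card = q} → Ω → ℝ,
        (∀ R, Measurable (J R)) →
        (∀ R, Measure.map (J R) P = μ) →
        iIndepFun J P →
        ∫ ω, ‖((2 : ℂ) ^ (n / 2))⁻¹ * ((sykH n q ψ J ω) ^ k).trace -
              ∫ ω', ((2 : ℂ) ^ (n / 2))⁻¹ * ((sykH n q ψ J ω') ^ k).trace ∂P‖ ^ 2 ∂P ≤
          C * ((n.choose q : ℝ))⁻¹ := by
  classical
  set M : ℝ := ∫ x, |x| ^ (k + k) ∂μ with hM
  have hM0 : 0 ≤ M := integral_nonneg (fun x => pow_nonneg (abs_nonneg x) _)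
  set B : ℝ := 2 * (1 + M) ^ (k + k) with hB
  have hB0 : 0 ≤ B := by positivity
  refine ⟨((k + k) ^ (k + k) : ℝ) * B, ?_⟩
  intro n q hn hneven hqeven hq2 hqn ψ hherm hcomm Ω mΩ P hPP J hJm hJmap hJind
  have hψ2 : ∀ i, ψ i * ψ i = 1 := by
    intro i
    have h := hcomm i i
    rw [if_pos rfl] at h
    have h2 : (2:ℂ) • (ψ i * ψ i) = (2:ℂ) • (1 : Matrix (Fin (2 ^ (n / 2))) (Fin (2 ^ (n / 2))) ℂ) := by
      rw [two_smul]; exact h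
    exact smul_right_injective _ two_ne_zero h2
  have hanti : ∀ i j, i ≠ j → ψ i * ψ j = -(ψ j * ψ i) := by
    intro i j hij
    have h := hcomm i j
    rw [if_neg hij] at h
    exact eq_neg_of_add_eq_zero_left h
  have hNcard : Fintype.card {A : Finset (Fin n) // A.card = q} = n.choose q := by
    rw [Fintype.card_finset_len, Fintype.card_fin]
  have hN1 : 1 ≤ n.choose q := Nat.choose_pos (le_of_lt hqn)
  set τ : (Fin k → {A : Finset (Fin n) // A.card = q}) → ℂ :=
    fun t => ((List.ofFn (fun j => PsiProd ψ ((t j : Finset (Fin n))))).prod).trace with hτ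
  set Av : (Fin k → {A : Finset (Fin n) // A.card = q}) → ℂ :=
    fun t => ((2:ℂ)^(n/2))⁻¹ *
      (Complex.I ^ (q / 2) * ((Real.sqrt (n.choose q) : ℂ))⁻¹) ^ k * τ t with hAv
  set pv : (Fin k → {A : Finset (Fin n) // A.card = q}) → Ω → ℝ :=
    fun t ω => ∏ j, J (t j) ω with hpv
  have hX : ∀ ω, ((2:ℂ)^(n/2))⁻¹ * ((sykH n q ψ J ω) ^ k).trace
      = ∑ t : Fin k → {A : Finset (Fin n) // A.card = q}, Av t * ((pv t ω : ℝ) : ℂ) := by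
    intro ω
    have e1 : ((sykH n q ψ J ω) ^ k).trace
        = (Complex.I ^ (q / 2) * ((Real.sqrt (n.choose q) : ℂ))⁻¹) ^ k
          * ∑ t : Fin k → {A : Finset (Fin n) // A.card = q},
              (∏ i, (J (t i) ω : ℂ)) * τ t := by
      rw [sykH, smul_pow, trace_smul, sum_pow_eq, trace_sum, smul_eq_mul]
      congr 1
      apply Finset.sum_congr rfl
      intro t _
      rw [ofFn_smul_prod, trace_smul, smul_eq_mul]
    rw [e1, ← mul_assoc, Finset.mul_sum]
    apply Finset.sum_congr rfl
    intro t _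
    simp only [hAv, hpv]
    push_cast
    ring
  -- probability: moments and factorization
  set μm : ℕ → ℝ := fun e => ∫ x, x ^ e ∂μ with hμm
  have hmaster : ∀ (κ : Type) [Fintype κ] (v : κ → {A : Finset (Fin n) // A.card = q}),
      Integrable (fun ω => ∏ i, J (v i) ω) P ∧
        ∫ ω, ∏ i, J (v i) ω ∂P
          = ∏ R ∈ Finset.univ.image v,
              μm ((Finset.univ.filter (fun i => v i = R)).card) := by
    intro κ _ v
    have hexp : (fun ω => ∏ i, J (v i) ω)
        = fun ω => ∏ R ∈ Finset.univ.image v,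
            (J R ω) ^ ((Finset.univ.filter (fun i => v i = R)).card) := by
      funext ω
      exact Finset.prod_comp (fun R => J R ω) v
    have h := indep_prod_integral hJm hJind
      (fun R x => x ^ ((Finset.univ.filter (fun i => v i = R)).card))
      (fun R => measurable_id.pow_const _)
      (fun R => (comp_integrable hJm hJmap _ (measurable_id.pow_const _)
         (pow_int hmom _) R).1)
      (Finset.univ.image v)
    rw [hexp]
    refine ⟨h.1, h.2.trans ?_⟩
    apply Finset.prod_congr rfl
    intro R _
    exact (comp_integrable hJm hJmap _ (measurable_id.pow_const _) (pow_int hmom _) R).2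
  have hIp : ∀ t, Integrable (fun ω => pv t ω) P := fun t => (hmaster (Fin k) t).1
  set mv : (Fin k → {A : Finset (Fin n) // A.card = q}) → ℝ :=
    fun t => ∫ ω, pv t ω ∂P with hmv
  have hEp : ∀ t, mv t = ∏ R ∈ Finset.univ.image t,
      μm ((Finset.univ.filter (fun i => t i = R)).card) :=
    fun t => (hmaster (Fin k) t).2
  have hps : ∀ t s, (fun ω => pv t ω * pv s ω)
      = fun ω => ∏ p : Fin k ⊕ Fin k, J (Sum.elim t s p) ω := by
    intro t s
    funext ω
    rw [Fintype.prod_sum_type]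
    rfl
  have hIpp : ∀ t s, Integrable (fun ω => pv t ω * pv s ω) P := by
    intro t s
    rw [hps]
    exact (hmaster (Fin k ⊕ Fin k) (Sum.elim t s)).1
  have hEpp : ∀ t s, ∫ ω, pv t ω * pv s ω ∂P
      = ∏ R ∈ Finset.univ.image (Sum.elim t s),
          μm ((Finset.univ.filter
            (fun p : Fin k ⊕ Fin k => Sum.elim t s p = R)).card) := by
    intro t s
    rw [hps]
    exact (hmaster (Fin k ⊕ Fin k) (Sum.elim t s)).2
  set Cov : (Fin k → {A : Finset (Fin n) // A.card = q}) →
      (Fin k → {A : Finset (Fin n) // A.card = q}) → ℝ :=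
    fun t s => (∫ ω, pv t ω * pv s ω ∂P) - mv t * mv s with hCovd
  -- moment bounds
  have h1M : (1:ℝ) ≤ 1 + M := by linarith
  have hμmle : ∀ e : ℕ, e ≤ k + k → |μm e| ≤ 1 + M := by
    intro e he
    have h1 : |μm e| ≤ ∫ x, |x| ^ e ∂μ := by
      have h2 := norm_integral_le_integral_norm (μ := μ) (fun x : ℝ => x ^ e)
      simpa [Real.norm_eq_abs, abs_pow, hμm] using h2
    exact h1.trans (moment_mono hmom he)
  have hprodle : ∀ (S : Finset {A : Finset (Fin n) // A.card = q}) (c : _ → ℕ)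
      (hS : S.card ≤ k + k) (hc : ∀ R ∈ S, c R ≤ k + k),
      |∏ R ∈ S, μm (c R)| ≤ (1 + M) ^ (k + k) := by
    intro S c hS hc
    rw [Finset.abs_prod]
    calc ∏ R ∈ S, |μm (c R)| ≤ ∏ _R ∈ S, (1 + M) :=
          Finset.prod_le_prod (fun _ _ => abs_nonneg _) (fun R hR => hμmle _ (hc R hR))
      _ = (1 + M) ^ S.card := by rw [Finset.prod_const]
      _ ≤ (1 + M) ^ (k + k) := pow_le_pow_right₀ h1M hS
  have hcard_im_pair : ∀ (t s : Fin k → {A : Finset (Fin n) // A.card = q}),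
      (Finset.univ.image (Sum.elim t s)).card ≤ k + k := by
    intro t s
    calc (Finset.univ.image (Sum.elim t s)).card
        ≤ (Finset.univ : Finset (Fin k ⊕ Fin k)).card := Finset.card_image_le
      _ = k + k := by rw [Finset.card_univ, Fintype.card_sum, Fintype.card_fin]
  have hcnt_le : ∀ (t s : Fin k → {A : Finset (Fin n) // A.card = q}) R,
      (Finset.univ.filter (fun p : Fin k ⊕ Fin k => Sum.elim t s p = R)).card ≤ k + k := by
    intro t s R
    calc (Finset.univ.filter (fun p : Fin k ⊕ Fin k => Sum.elim t s p = R)).card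
        ≤ (Finset.univ : Finset (Fin k ⊕ Fin k)).card := Finset.card_filter_le _ _
      _ = k + k := by rw [Finset.card_univ, Fintype.card_sum, Fintype.card_fin]
  have hmvle : ∀ t, |mv t| ≤ (1 + M) ^ (k + k) := by
    intro t
    rw [hEp t]
    apply hprodle
    · calc (Finset.univ.image t).card ≤ (Finset.univ : Finset (Fin k)).card :=
            Finset.card_image_le
        _ = k := by rw [Finset.card_univ, Fintype.card_fin]
        _ ≤ k + k := by omega
    · intro R _
      calc (Finset.univ.filter (fun i => t i = R)).card
          ≤ (Finset.univ : Finset (Fin k)).card := Finset.card_filter_le _ _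
        _ = k := by rw [Finset.card_univ, Fintype.card_fin]
        _ ≤ k + k := by omega
  have hmvlek : ∀ t, |mv t| ≤ (1 + M) ^ k := by
    intro t
    rw [hEp t]
    rw [Finset.abs_prod]
    calc ∏ R ∈ Finset.univ.image t, |μm ((Finset.univ.filter (fun i => t i = R)).card)|
        ≤ ∏ _R ∈ Finset.univ.image t, (1 + M) := by
          apply Finset.prod_le_prod (fun _ _ => abs_nonneg _)
          intro R _
          apply hμmle
          calc (Finset.univ.filter (fun i => t i = R)).card
              ≤ (Finset.univ : Finset (Fin k)).card := Finset.card_filter_le _ _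
            _ = k := by rw [Finset.card_univ, Fintype.card_fin]
            _ ≤ k + k := by omega
      _ = (1 + M) ^ (Finset.univ.image t).card := by rw [Finset.prod_const]
      _ ≤ (1 + M) ^ k := by
          apply pow_le_pow_right₀ h1M
          calc (Finset.univ.image t).card ≤ (Finset.univ : Finset (Fin k)).card :=
                Finset.card_image_le
            _ = k := by rw [Finset.card_univ, Fintype.card_fin]
  have hCovle : ∀ t s, |Cov t s| ≤ B := by
    intro t s
    have h1 : |∫ ω, pv t ω * pv s ω ∂P| ≤ (1 + M) ^ (k + k) := by
      rw [hEpp t s]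
      exact hprodle _ _ (hcard_im_pair t s) (fun R _ => hcnt_le t s R)
    have h2 : |mv t * mv s| ≤ (1 + M) ^ (k + k) := by
      rw [abs_mul]
      calc |mv t| * |mv s| ≤ (1 + M) ^ k * (1 + M) ^ k :=
            mul_le_mul (hmvlek t) (hmvlek s) (abs_nonneg _) (by positivity)
        _ = (1 + M) ^ (k + k) := by rw [← pow_add]
    calc |Cov t s| ≤ |∫ ω, pv t ω * pv s ω ∂P| + |mv t * mv s| := abs_sub _ _
      _ ≤ (1 + M) ^ (k + k) + (1 + M) ^ (k + k) := add_le_add h1 h2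
      _ = B := by rw [hB]; ring
  -- Covariance vanishing
  have hcnt : ∀ (t s : Fin k → {A : Finset (Fin n) // A.card = q}) R,
      (Finset.univ.filter (fun p : Fin k ⊕ Fin k => Sum.elim t s p = R)).card
        = (Finset.univ.filter (fun i => t i = R)).card
          + (Finset.univ.filter (fun j => s j = R)).card := by
    intro t s R
    rw [Finset.card_filter, Fintype.sum_sum_type, Finset.card_filter, Finset.card_filter]
    rfl
  have himgU : ∀ (t s : Fin k → {A : Finset (Fin n) // A.card = q}),
      Finset.univ.image (Sum.elim t s) = Finset.univ.image t ∪ Finset.univ.image s := by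
    intro t s
    ext x
    simp [Finset.mem_image, Finset.mem_union, Sum.exists]
  have hCov0a : ∀ t s, (¬ ∃ i j, t i = s j) → Cov t s = 0 := by
    intro t s hno
    have hdisj : Disjoint (Finset.univ.image t) (Finset.univ.image s) := by
      rw [Finset.disjoint_left]
      intro x hxt hxs
      obtain ⟨i, _, rfl⟩ := Finset.mem_image.mp hxt
      obtain ⟨j, _, hj⟩ := Finset.mem_image.mp hxs
      exact hno ⟨i, j, hj.symm⟩
    have h1 : ∫ ω, pv t ω * pv s ω ∂P = mv t * mv s := by
      rw [hEpp, himgU, Finset.prod_union hdisj, hEp, hEp]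
      congr 1
      · apply Finset.prod_congr rfl
        intro R hR
        congr 1
        rw [hcnt]
        have h0 : (Finset.univ.filter (fun j => s j = R)).card = 0 := by
          rw [Finset.card_eq_zero, Finset.filter_eq_empty_iff]
          intro j _ hj
          exact Finset.disjoint_left.mp hdisj hR
            (Finset.mem_image.mpr ⟨j, Finset.mem_univ j, hj⟩)
        omega
      · apply Finset.prod_congr rfl
        intro R hR
        congr 1
        rw [hcnt]
        have h0 : (Finset.univ.filter (fun i => t i = R)).card = 0 := by
          rw [Finset.card_eq_zero, Finset.filter_eq_empty_iff]
          intro i _ hi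
          exact Finset.disjoint_right.mp hdisj hR
            (Finset.mem_image.mpr ⟨i, Finset.mem_univ i, hi⟩)
        omega
    simp only [hCovd]
    rw [h1, sub_self]
  have hμ1 : μm 1 = 0 := by
    simp only [hμm]
    simpa using hmean
  have hCov0b : ∀ t s R₀,
      (Finset.univ.filter (fun p : Fin k ⊕ Fin k => Sum.elim t s p = R₀)).card = 1 →
      Cov t s = 0 := by
    intro t s R₀ h1
    have hmemU : R₀ ∈ Finset.univ.image (Sum.elim t s) := by
      have h2 : (Finset.univ.filter
          (fun p : Fin k ⊕ Fin k => Sum.elim t s p = R₀)).Nonempty := by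
        rw [← Finset.card_pos, h1]
        norm_num
      obtain ⟨p, hp⟩ := h2
      rw [Finset.mem_filter] at hp
      exact Finset.mem_image.mpr ⟨p, Finset.mem_univ p, hp.2⟩
    have hfirst : ∫ ω, pv t ω * pv s ω ∂P = 0 := by
      rw [hEpp]
      exact Finset.prod_eq_zero hmemU (by rw [h1]; exact hμ1)
    have hsplit := hcnt t s R₀
    rw [h1] at hsplit
    have hsecond : mv t * mv s = 0 := by
      rcases (by omega : (Finset.univ.filter (fun i => t i = R₀)).card = 1 ∨
          (Finset.univ.filter (fun j => s j = R₀)).card = 1) with h | h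
      · have hne : (Finset.univ.filter (fun i => t i = R₀)).Nonempty := by
          rw [← Finset.card_pos, h]; norm_num
        obtain ⟨i, hi⟩ := hne
        rw [Finset.mem_filter] at hi
        have hmem : R₀ ∈ Finset.univ.image t :=
          Finset.mem_image.mpr ⟨i, Finset.mem_univ i, hi.2⟩
        have hz : mv t = 0 := by
          rw [hEp]
          exact Finset.prod_eq_zero hmem (by rw [h]; exact hμ1)
        rw [hz, zero_mul]
      · have hne : (Finset.univ.filter (fun j => s j = R₀)).Nonempty := by
          rw [← Finset.card_pos, h]; norm_num
        obtain ⟨j, hj⟩ := hne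
        rw [Finset.mem_filter] at hj
        have hmem : R₀ ∈ Finset.univ.image s :=
          Finset.mem_image.mpr ⟨j, Finset.mem_univ j, hj.2⟩
        have hz : mv s = 0 := by
          rw [hEp]
          exact Finset.prod_eq_zero hmem (by rw [h]; exact hμ1)
        rw [hz, mul_zero]
    simp only [hCovd]
    rw [hfirst, hsecond, zero_sub, neg_zero]
  -- vanishing of the coefficient when the parity condition fails
  set good : (Fin k → {A : Finset (Fin n) // A.card = q}) → Prop :=
    fun t => ∀ i : Fin n,
      Even ((Finset.univ.filter (fun j => i ∈ (t j : Finset (Fin n)))).card) with hgoodd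
  have hA0 : ∀ t, ¬ good t → Av t = 0 := by
    intro t hng
    simp only [hgoodd] at hng
    push_neg at hng
    obtain ⟨i, hi⟩ := hng
    have hodd : Odd ((Finset.univ.filter (fun j => i ∈ (t j : Finset (Fin n)))).card) :=
      Nat.not_even_iff_odd.mp hi
    have hτ0 : τ t = 0 := trace_psiProd_prod_eq_zero ψ hψ2 hanti hqeven t i hodd
    simp only [hAv, hτ0, mul_zero]
  -- the parity condition determines any single coordinate
  have hdet : ∀ (j₀ : Fin k) (t t' : Fin k → {A : Finset (Fin n) // A.card = q}),
      good t → good t' → (∀ j, j ≠ j₀ → t j = t' j) → t = t' := by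
    intro j₀ t t' hgt hgt' hagree
    funext j
    by_cases hj : j = j₀
    swap
    · exact hagree j hj
    subst hj
    apply Subtype.ext
    apply Finset.ext
    intro i
    have h1 := hgt i
    have h2 := hgt' i
    have hsum : ∀ tt : Fin k → {A : Finset (Fin n) // A.card = q},
        (Finset.univ.filter (fun j' => i ∈ (tt j' : Finset (Fin n)))).card
        = (if i ∈ (tt j : Finset (Fin n)) then 1 else 0)
          + ∑ j' ∈ Finset.univ.erase j,
              (if i ∈ (tt j' : Finset (Fin n)) then 1 else 0) := by
      intro tt
      rw [Finset.card_filter]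
      exact (Finset.add_sum_erase _ _ (Finset.mem_univ j)).symm
    have hS : ∑ j' ∈ Finset.univ.erase j, (if i ∈ (t j' : Finset (Fin n)) then 1 else 0)
        = ∑ j' ∈ Finset.univ.erase j, (if i ∈ (t' j' : Finset (Fin n)) then 1 else 0) := by
      apply Finset.sum_congr rfl
      intro j' hj'
      rw [hagree j' (Finset.mem_erase.mp hj').1]
    rw [hsum t, hS] at h1
    rw [hsum t'] at h2
    constructor
    · intro hmem
      by_contra hmem'
      rw [if_pos hmem] at h1
      rw [if_neg hmem'] at h2
      obtain ⟨a, ha⟩ := h1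
      obtain ⟨b, hb⟩ := h2
      omega
    · intro hmem
      by_contra hmem'
      rw [if_neg hmem'] at h1
      rw [if_pos hmem] at h2
      obtain ⟨a, ha⟩ := h1
      obtain ⟨b, hb⟩ := h2
      omega
  -- norm bounds on the coefficients
  have hτle : ∀ t, ‖τ t‖ ≤ ((2:ℝ) ^ (n / 2)) := by
    intro t
    have h := trace_norm_le_of_unitary _
      (ofFn_psiProd_unitary ψ hherm hψ2 (fun j => ((t j : Finset (Fin n)))))
    rw [Fintype.card_fin] at h
    simp only [hτ]
    calc ‖((List.ofFn (fun j => PsiProd ψ ((t j : Finset (Fin n))))).prod).trace‖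
        ≤ ((2 ^ (n / 2) : ℕ) : ℝ) := h
      _ = (2:ℝ) ^ (n / 2) := by push_cast; ring
  have hsqrtpos : 0 < Real.sqrt (n.choose q) := by
    apply Real.sqrt_pos.mpr
    exact_mod_cast hN1
  have hAle : ∀ t, ‖Av t‖ ≤ ((Real.sqrt (n.choose q))⁻¹) ^ k := by
    intro t
    have hL : (0:ℝ) < 2 ^ (n / 2) := by positivity
    have h2 : ‖((2:ℂ) ^ (n / 2))⁻¹‖ = ((2:ℝ) ^ (n / 2))⁻¹ := by
      rw [norm_inv, norm_pow]
      norm_num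
    have hc : ‖Complex.I ^ (q / 2) * ((Real.sqrt (n.choose q) : ℂ))⁻¹‖
        = (Real.sqrt (n.choose q))⁻¹ := by
      rw [norm_mul, norm_pow, Complex.norm_I, one_pow, one_mul, norm_inv,
        Complex.norm_real, Real.norm_eq_abs, abs_of_nonneg (Real.sqrt_nonneg _)]
    have hAn : ‖Av t‖ = ((2:ℝ) ^ (n / 2))⁻¹ * ((Real.sqrt (n.choose q))⁻¹) ^ k * ‖τ t‖ := by
      simp only [hAv]
      rw [norm_mul, norm_mul, norm_pow, h2, hc]
    rw [hAn]
    calc ((2:ℝ) ^ (n / 2))⁻¹ * ((Real.sqrt (n.choose q))⁻¹) ^ k * ‖τ t‖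
        ≤ ((2:ℝ) ^ (n / 2))⁻¹ * ((Real.sqrt (n.choose q))⁻¹) ^ k * ((2:ℝ) ^ (n / 2)) := by
          apply mul_le_mul_of_nonneg_left (hτle t)
          positivity
      _ = ((Real.sqrt (n.choose q))⁻¹) ^ k := by
          field_simp
  have hAA : ∀ t s, ‖Av t‖ * ‖Av s‖ ≤ (((n.choose q : ℝ)) ^ k)⁻¹ := by
    intro t s
    calc ‖Av t‖ * ‖Av s‖
        ≤ ((Real.sqrt (n.choose q))⁻¹) ^ k * ((Real.sqrt (n.choose q))⁻¹) ^ k :=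
          mul_le_mul (hAle t) (hAle s) (norm_nonneg _) (by positivity)
      _ = (((n.choose q : ℝ)) ^ k)⁻¹ := by
          rw [← mul_pow, ← mul_inv, Real.mul_self_sqrt (Nat.cast_nonneg _), inv_pow]
  -- variance expansion
  have hIpc : ∀ t, Integrable (fun ω => Av t * ((pv t ω : ℝ) : ℂ)) P := by
    intro t
    exact ((hIp t).ofReal (𝕜 := ℂ)).const_mul _
  have hEX : ∫ ω', ((2:ℂ) ^ (n / 2))⁻¹ * ((sykH n q ψ J ω') ^ k).trace ∂P
      = ∑ t, Av t * ((mv t : ℝ) : ℂ) := by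
    calc ∫ ω', ((2:ℂ) ^ (n / 2))⁻¹ * ((sykH n q ψ J ω') ^ k).trace ∂P
        = ∫ ω', ∑ t, Av t * ((pv t ω' : ℝ) : ℂ) ∂P := by
          apply integral_congr_ae
          filter_upwards with ω
          exact hX ω
      _ = ∑ t, ∫ ω', Av t * ((pv t ω' : ℝ) : ℂ) ∂P :=
          integral_finset_sum _ (fun t _ => hIpc t)
      _ = ∑ t, Av t * ((mv t : ℝ) : ℂ) := by
          apply Finset.sum_congr rfl
          intro t _
          have h1 : ∫ ω', Av t * ((pv t ω' : ℝ) : ℂ) ∂P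
              = Av t * ∫ ω', ((pv t ω' : ℝ) : ℂ) ∂P := by
            simp_rw [← smul_eq_mul]
            exact integral_smul (Av t) _
          rw [h1]
          congr 1
          exact integral_ofReal (𝕜 := ℂ)
  have hnormsq : ∀ ω : Ω, ‖(∑ t, Av t * ((pv t ω : ℝ) : ℂ))
        - ∑ t, Av t * ((mv t : ℝ) : ℂ)‖ ^ 2
      = ∑ ts : (Fin k → {A : Finset (Fin n) // A.card = q})
            × (Fin k → {A : Finset (Fin n) // A.card = q}),
          (Av ts.1 * (starRingEnd ℂ) (Av ts.2)).re
            * ((pv ts.1 ω - mv ts.1) * (pv ts.2 ω - mv ts.2)) := by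
    intro ω
    have hz : (∑ t, Av t * ((pv t ω : ℝ) : ℂ)) - ∑ t, Av t * ((mv t : ℝ) : ℂ)
        = ∑ t, Av t * (((pv t ω - mv t : ℝ)) : ℂ) := by
      rw [← Finset.sum_sub_distrib]
      apply Finset.sum_congr rfl
      intro t _
      push_cast
      ring
    rw [hz]
    have h1 : ‖∑ t, Av t * (((pv t ω - mv t : ℝ)) : ℂ)‖ ^ 2
        = ((∑ t, Av t * (((pv t ω - mv t : ℝ)) : ℂ))
            * (starRingEnd ℂ) (∑ t, Av t * (((pv t ω - mv t : ℝ)) : ℂ))).re := by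
      rw [Complex.mul_conj, Complex.ofReal_re, Complex.sq_norm]
    rw [h1, map_sum, Finset.sum_mul_sum, ← Finset.sum_product', Finset.univ_product_univ,
      Complex.re_sum]
    apply Finset.sum_congr rfl
    intro ts _
    rw [_root_.map_mul (starRingEnd ℂ), Complex.conj_ofReal]
    have h2 : Av ts.1 * (((pv ts.1 ω - mv ts.1 : ℝ)) : ℂ)
          * ((starRingEnd ℂ) (Av ts.2) * (((pv ts.2 ω - mv ts.2 : ℝ)) : ℂ))
        = (Av ts.1 * (starRingEnd ℂ) (Av ts.2))
          * ((((pv ts.1 ω - mv ts.1) * (pv ts.2 ω - mv ts.2) : ℝ)) : ℂ) := by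
      push_cast
      ring
    rw [h2, Complex.mul_re, Complex.ofReal_re, Complex.ofReal_im, mul_zero, sub_zero]
  have hIg : ∀ ts : (Fin k → {A : Finset (Fin n) // A.card = q})
        × (Fin k → {A : Finset (Fin n) // A.card = q}),
      Integrable (fun ω => (pv ts.1 ω - mv ts.1) * (pv ts.2 ω - mv ts.2)) P := by
    intro ts
    have hrw : (fun ω => (pv ts.1 ω - mv ts.1) * (pv ts.2 ω - mv ts.2))
        = fun ω => pv ts.1 ω * pv ts.2 ω - mv ts.1 * pv ts.2 ω
            - mv ts.2 * pv ts.1 ω + mv ts.1 * mv ts.2 := by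
      funext ω
      ring
    rw [hrw]
    exact (((hIpp ts.1 ts.2).sub ((hIp ts.2).const_mul _)).sub
      ((hIp ts.1).const_mul _)).add (integrable_const _)
  have hEg : ∀ ts : (Fin k → {A : Finset (Fin n) // A.card = q})
        × (Fin k → {A : Finset (Fin n) // A.card = q}),
      ∫ ω, (pv ts.1 ω - mv ts.1) * (pv ts.2 ω - mv ts.2) ∂P = Cov ts.1 ts.2 := by
    intro ts
    have hrw : (fun ω => (pv ts.1 ω - mv ts.1) * (pv ts.2 ω - mv ts.2))
        = fun ω => pv ts.1 ω * pv ts.2 ω - mv ts.1 * pv ts.2 ω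
            - mv ts.2 * pv ts.1 ω + mv ts.1 * mv ts.2 := by
      funext ω
      ring
    have ia : Integrable (fun ω => pv ts.1 ω * pv ts.2 ω - mv ts.1 * pv ts.2 ω) P :=
      (hIpp ts.1 ts.2).sub ((hIp ts.2).const_mul _)
    have ib : Integrable (fun ω => pv ts.1 ω * pv ts.2 ω - mv ts.1 * pv ts.2 ω
        - mv ts.2 * pv ts.1 ω) P := ia.sub ((hIp ts.1).const_mul _)
    rw [hrw, integral_add ib (integrable_const _),
      integral_sub ia ((hIp ts.1).const_mul _),
      integral_sub (hIpp ts.1 ts.2) ((hIp ts.2).const_mul _),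
      integral_const_mul, integral_const_mul, integral_const, probReal_univ]
    simp only [hCovd, ENNReal.toReal_one, smul_eq_mul, one_mul]
    have e1 : ∫ ω, pv ts.2 ω ∂P = mv ts.2 := rfl
    have e2 : ∫ ω, pv ts.1 ω ∂P = mv ts.1 := rfl
    rw [e1, e2]
    ring
  -- the set of contributing pairs
  set Bad : Finset ((Fin k → {A : Finset (Fin n) // A.card = q})
      × (Fin k → {A : Finset (Fin n) // A.card = q})) :=
    Finset.univ.filter (fun ts =>
        good ts.1 ∧ good ts.2 ∧ (∃ i j, ts.1 i = ts.2 j) ∧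
        ∀ R, (Finset.univ.filter
            (fun p : Fin k ⊕ Fin k => Sum.elim ts.1 ts.2 p = R)).card ≠ 1) with hBadd
  have hNpos : (0:ℝ) < ((n.choose q : ℝ)) := by exact_mod_cast hN1
  have hterm : ∀ ts : (Fin k → {A : Finset (Fin n) // A.card = q})
        × (Fin k → {A : Finset (Fin n) // A.card = q}),
      (Av ts.1 * (starRingEnd ℂ) (Av ts.2)).re * Cov ts.1 ts.2
      ≤ (((n.choose q : ℝ)) ^ k)⁻¹ * B := by
    intro ts
    calc (Av ts.1 * (starRingEnd ℂ) (Av ts.2)).re * Cov ts.1 ts.2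
        ≤ |(Av ts.1 * (starRingEnd ℂ) (Av ts.2)).re * Cov ts.1 ts.2| := le_abs_self _
      _ = |(Av ts.1 * (starRingEnd ℂ) (Av ts.2)).re| * |Cov ts.1 ts.2| := abs_mul _ _
      _ ≤ ‖Av ts.1 * (starRingEnd ℂ) (Av ts.2)‖ * |Cov ts.1 ts.2| := by
          apply mul_le_mul_of_nonneg_right _ (abs_nonneg _)
          exact Complex.abs_re_le_norm _
      _ = ‖Av ts.1‖ * ‖Av ts.2‖ * |Cov ts.1 ts.2| := by
          rw [norm_mul, RCLike.norm_conj]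
      _ ≤ (((n.choose q : ℝ)) ^ k)⁻¹ * B :=
          mul_le_mul (hAA ts.1 ts.2) (hCovle ts.1 ts.2) (abs_nonneg _)
            (inv_nonneg.mpr (pow_nonneg hNpos.le k))
  have hzero : ∀ ts ∉ Bad,
      (Av ts.1 * (starRingEnd ℂ) (Av ts.2)).re * Cov ts.1 ts.2 = 0 := by
    intro ts hts
    simp only [hBadd, Finset.mem_filter, Finset.mem_univ, true_and] at hts
    by_cases hg1 : good ts.1
    swap
    · rw [hA0 ts.1 hg1, zero_mul, Complex.zero_re, zero_mul]
    by_cases hg2 : good ts.2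
    swap
    · rw [hA0 ts.2 hg2, map_zero (starRingEnd ℂ), mul_zero, Complex.zero_re, zero_mul]
    by_cases ho : ∃ i j, ts.1 i = ts.2 j
    swap
    · rw [hCov0a ts.1 ts.2 ho, mul_zero]
    · have hex : ∃ R, (Finset.univ.filter
          (fun p : Fin k ⊕ Fin k => Sum.elim ts.1 ts.2 p = R)).card = 1 := by
        by_contra hcon
        push_neg at hcon
        exact hts ⟨hg1, hg2, ho, hcon⟩
      obtain ⟨R₀, hR₀⟩ := hex
      rw [hCov0b ts.1 ts.2 R₀ hR₀, mul_zero]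
  have hBadcard : (Bad.card : ℝ) ≤ ((k+k) ^ (k+k) : ℝ) * ((n.choose q : ℝ)) ^ (k-1) := by
    have h := count_bad k hk good hdet
    rw [hNcard] at h
    have h2 : (Bad.card : ℝ) ≤ (((k+k) ^ (k+k) * (n.choose q) ^ (k-1) : ℕ) : ℝ) := by
      have h3 : Bad.card ≤ (k+k) ^ (k+k) * (n.choose q) ^ (k-1) := by
        rw [hBadd]
        convert h using 2
        ext ts
        simp only [Finset.mem_filter]
      exact_mod_cast h3
    calc (Bad.card : ℝ) ≤ _ := h2
      _ = ((k+k) ^ (k+k) : ℝ) * ((n.choose q : ℝ)) ^ (k-1) := by push_cast; ring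
  calc ∫ ω, ‖((2 : ℂ) ^ (n / 2))⁻¹ * ((sykH n q ψ J ω) ^ k).trace -
          ∫ ω', ((2 : ℂ) ^ (n / 2))⁻¹ * ((sykH n q ψ J ω') ^ k).trace ∂P‖ ^ 2 ∂P
      = ∫ ω, ∑ ts : (Fin k → {A : Finset (Fin n) // A.card = q})
            × (Fin k → {A : Finset (Fin n) // A.card = q}),
          (Av ts.1 * (starRingEnd ℂ) (Av ts.2)).re
            * ((pv ts.1 ω - mv ts.1) * (pv ts.2 ω - mv ts.2)) ∂P := by
        apply integral_congr_ae
        filter_upwards with ω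
        rw [hEX, hX ω]
        exact hnormsq ω
    _ = ∑ ts : (Fin k → {A : Finset (Fin n) // A.card = q})
            × (Fin k → {A : Finset (Fin n) // A.card = q}),
          (Av ts.1 * (starRingEnd ℂ) (Av ts.2)).re * Cov ts.1 ts.2 := by
        rw [integral_finset_sum _ (fun ts _ => (hIg ts).const_mul _)]
        apply Finset.sum_congr rfl
        intro ts _
        rw [integral_const_mul, hEg ts]
    _ = ∑ ts ∈ Bad, (Av ts.1 * (starRingEnd ℂ) (Av ts.2)).re * Cov ts.1 ts.2 :=
        (Finset.sum_subset (Finset.subset_univ Bad)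
          (fun ts _ hts => hzero ts hts)).symm
    _ ≤ ∑ _ts ∈ Bad, (((n.choose q : ℝ)) ^ k)⁻¹ * B :=
        Finset.sum_le_sum (fun ts _ => hterm ts)
    _ = (Bad.card : ℝ) * ((((n.choose q : ℝ)) ^ k)⁻¹ * B) := by
        rw [Finset.sum_const, nsmul_eq_mul]
    _ ≤ (((k+k) ^ (k+k) : ℝ) * ((n.choose q : ℝ)) ^ (k-1))
          * ((((n.choose q : ℝ)) ^ k)⁻¹ * B) := by
        apply mul_le_mul_of_nonneg_right hBadcard
        exact mul_nonneg (inv_nonneg.mpr (pow_nonneg hNpos.le k)) hB0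
    _ = ((k + k) ^ (k + k) : ℝ) * B * ((n.choose q : ℝ))⁻¹ := by
        have hpow : ((n.choose q : ℝ)) ^ k
            = ((n.choose q : ℝ)) ^ (k-1) * ((n.choose q : ℝ)) := by
          rw [← pow_succ]
          congr 1
          omega
        have hne : ((n.choose q : ℝ)) ^ (k-1) ≠ 0 := pow_ne_zero _ hNpos.ne'
        rw [hpow, mul_inv]
        field_simp
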